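/- Let ψ, φ ∈ δ_N with ψ ⊀ φ, and define χ_sup = ψ ∨ φ. Then χ_sup minimizes the lattice distance to φ over all χ ∈ δ_N with ψ ≺ χ: for every χ ∈ δ_N with ψ ≺ χ, d(φ, χ) ≥ d(φ, χ_sup), where d(p,q) = H(p) + H(q) − 2H(p ∨ q). -/
import Mathlib


open Finset

/-- Partial sum of the first `l` components of `p`. -/
def PartSum {N : ℕ} (p : Fin N → ℝ) (l : ℕ) : ℝ := ∑ i : Fin N, if (i : ℕ) < l then p i else 0

/-- `p` is a probability vector sorted in decreasing order (an element of δ_N). -/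
def IsDecProb {N : ℕ} (p : Fin N → ℝ) : Prop :=
  (∀ i, 0 ≤ p i) ∧ (∀ i j : Fin N, i ≤ j → p j ≤ p i) ∧ ∑ i, p i = 1

/-- `p ≺ q` : every partial sum of `p` is at most the corresponding partial sum of `q`. -/
def Maj {N : ℕ} (p q : Fin N → ℝ) : Prop := ∀ l : ℕ, PartSum p l ≤ PartSum q l

/-- `s` is the supremum of `p` and `q` in the majorization lattice. -/
def IsSup {N : ℕ} (s p q : Fin N → ℝ) : Prop :=
  IsDecProb s ∧ Maj p s ∧ Maj q s ∧ ∀ t, IsDecProb t → Maj p t → Maj q t → Maj s t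

/-- `s` is the infimum of `p` and `q` in the majorization lattice. -/
def IsInf {N : ℕ} (s p q : Fin N → ℝ) : Prop :=
  IsDecProb s ∧ Maj s p ∧ Maj s q ∧ ∀ t, IsDecProb t → Maj t p → Maj t q → Maj t s

/-- Shannon entropy. -/
noncomputable def H {N : ℕ} (p : Fin N → ℝ) : ℝ := -∑ i, p i * Real.log (p i)

lemma maj_trans {N : ℕ} {p q r : Fin N → ℝ} (h1 : Maj p q) (h2 : Maj q r) : Maj p r :=
  fun l => le_trans (h1 l) (h2 l)

lemma partSum_succ {N : ℕ} (p : Fin N → ℝ) {l : ℕ} (hl : l < N) :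
    PartSum p (l+1) = PartSum p l + p ⟨l, hl⟩ := by
  unfold PartSum
  have key : ∀ i : Fin N, (if (i:ℕ) < l+1 then p i else 0)
      = (if (i:ℕ) < l then p i else 0) + (if i = ⟨l, hl⟩ then p i else 0) := by
    intro i
    by_cases h1 : (i:ℕ) < l
    · have h2 : (i:ℕ) < l + 1 := by omega
      have h3 : i ≠ ⟨l, hl⟩ := by
        intro h; rw [h] at h1; simp at h1
      simp [h1, h2, h3]
    · by_cases h2 : (i:ℕ) = l
      · have h3 : i = ⟨l, hl⟩ := Fin.ext h2
        have h4 : (i:ℕ) < l + 1 := by omega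
        simp [h1, h3, h4]
      · have h3 : ¬ (i:ℕ) < l + 1 := by omega
        have h4 : i ≠ ⟨l, hl⟩ := by
          intro h; rw [h] at h2; simp at h2
        simp [h1, h3, h4]
  rw [Finset.sum_congr rfl (fun i _ => key i), Finset.sum_add_distrib]
  simp

lemma partSum_of_ge {N : ℕ} (p : Fin N → ℝ) {l : ℕ} (hl : N ≤ l) :
    PartSum p l = ∑ i, p i := by
  unfold PartSum
  apply Finset.sum_congr rfl
  intro i _
  have : (i:ℕ) < l := lt_of_lt_of_le i.isLt hl
  simp [this]

lemma partSum_le_sum {N : ℕ} {p : Fin N → ℝ} (hp : ∀ i, 0 ≤ p i) (l : ℕ) :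
    PartSum p l ≤ ∑ i, p i := by
  unfold PartSum
  apply Finset.sum_le_sum
  intro i _
  by_cases h : (i:ℕ) < l <;> simp [h, hp i]

lemma partSum_eq_one_of_zero {N : ℕ} {p : Fin N → ℝ} (hp : IsDecProb p) (i : Fin N)
    (hpi : p i = 0) : PartSum p (i:ℕ) = 1 := by
  obtain ⟨h0, hd, h1⟩ := hp
  rw [← h1]
  unfold PartSum
  apply Finset.sum_congr rfl
  intro j _
  by_cases h : (j:ℕ) < (i:ℕ)
  · simp [h]
  · have hij : i ≤ j := by
      rw [Fin.le_def]; omega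
    have : p j = 0 := le_antisymm (hpi ▸ hd i j hij) (h0 j)
    simp [h, this]

lemma eq_zero_of_partSum_one {N : ℕ} {q : Fin N → ℝ} (hq : IsDecProb q) {l : ℕ}
    (hl : PartSum q l = 1) (i : Fin N) (hi : l ≤ (i:ℕ)) : q i = 0 := by
  obtain ⟨h0, hd, h1⟩ := hq
  have hsum : ∑ j : Fin N, (q j - if (j:ℕ) < l then q j else 0) = 0 := by
    rw [Finset.sum_sub_distrib, h1]
    unfold PartSum at hl
    rw [hl]; ring
  have hterm : ∀ j : Fin N, j ∈ Finset.univ → 0 ≤ q j - if (j:ℕ) < l then q j else 0 := by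
    intro j _
    by_cases h : (j:ℕ) < l <;> simp [h, h0 j]
  have := (Finset.sum_eq_zero_iff_of_nonneg hterm).mp hsum i (Finset.mem_univ i)
  have hni : ¬ (i:ℕ) < l := by omega
  simpa [hni] using this

lemma grad_ineq (p q : ℝ) (hp : 0 ≤ p) (hq : 0 ≤ q) (hz : p = 0 → q = 0) :
    -(q * Real.log q) - -(p * Real.log p) ≤ -(1 + Real.log p) * (q - p) := by
  rcases eq_or_lt_of_le hp with h | hppos
  · have hq0 : q = 0 := hz h.symm
    simp [← h, hq0]
  rcases eq_or_lt_of_le hq with h | hqpos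
  · rw [← h]
    simp only [Real.log_zero, mul_zero, zero_mul, neg_zero, zero_sub]
    nlinarith [hppos]
  · have hkey : Real.log (p / q) ≤ p / q - 1 := Real.log_le_sub_one_of_pos (by positivity)
    rw [Real.log_div (ne_of_gt hppos) (ne_of_gt hqpos)] at hkey
    have h2 : q * (Real.log p - Real.log q) ≤ q * (p / q - 1) :=
      mul_le_mul_of_nonneg_left hkey hq
    have h3 : q * (p / q - 1) = p - q := by field_simp
    nlinarith [h2, h3]

lemma abel_le (C D : ℕ → ℝ) (hD0 : D 0 = 0) :
    ∀ n, (∀ l, 0 < l → l ≤ n → C (l-1) * D l ≤ C l * D l) →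
      ∑ l ∈ Finset.range n, C l * (D (l+1) - D l) ≤ C n * D n := by
  intro n
  induction n with
  | zero => intro _; simp [hD0]
  | succ n ih =>
    intro h
    rw [Finset.sum_range_succ]
    have h1 := ih (fun l hl hln => h l hl (by omega))
    have h2 := h (n+1) (by omega) le_rfl
    have h3 : (n+1) - 1 = n := by omega
    rw [h3] at h2
    have h4 : C n * (D (n+1) - D n) = C n * D (n+1) - C n * D n := by ring
    linarith

lemma schur_H {N : ℕ} {p q : Fin N → ℝ} (hp : IsDecProb p) (hq : IsDecProb q)
    (hm : Maj p q) : H q ≤ H p := by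
  obtain ⟨hp0, hpd, hp1⟩ := hp
  obtain ⟨hq0, hqd, hq1⟩ := hq
  have hzero : ∀ i : Fin N, p i = 0 → q i = 0 := by
    intro i hpi
    have hA : PartSum p (i:ℕ) = 1 := partSum_eq_one_of_zero ⟨hp0, hpd, hp1⟩ i hpi
    have hB1 : PartSum q (i:ℕ) ≤ 1 := hq1 ▸ partSum_le_sum hq0 i
    have hB : PartSum q (i:ℕ) = 1 := le_antisymm hB1 (hA ▸ hm i)
    exact eq_zero_of_partSum_one ⟨hq0, hqd, hq1⟩ hB i le_rfl
  set c : Fin N → ℝ := fun i => -(1 + Real.log (p i)) with hc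
  set C : ℕ → ℝ := fun l => if h : l < N then c ⟨l, h⟩ else 0 with hC
  set D : ℕ → ℝ := fun l => PartSum q l - PartSum p l with hD
  have hDnn : ∀ l, 0 ≤ D l := fun l => sub_nonneg.mpr (hm l)
  have hDN : D N = 0 := by
    simp only [hD]
    rw [partSum_of_ge p le_rfl, partSum_of_ge q le_rfl, hp1, hq1]; ring
  have hD0 : D 0 = 0 := by simp [hD, PartSum]
  have step2 : ∑ i : Fin N, c i * (q i - p i) ≤ 0 := by
    have key : ∑ i : Fin N, c i * (q i - p i)
        = ∑ l ∈ Finset.range N, C l * (D (l+1) - D l) := by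
      rw [Finset.sum_range fun l => C l * (D (l+1) - D l)]
      apply Finset.sum_congr rfl
      intro i _
      have h1 : C (i:ℕ) = c i := by
        simp only [hC]
        rw [dif_pos i.isLt]
      have h2 : D ((i:ℕ)+1) - D (i:ℕ) = q i - p i := by
        simp only [hD]
        rw [partSum_succ p i.isLt, partSum_succ q i.isLt]
        ring_nf
      rw [h1, h2]
    rw [key]
    have habel := abel_le C D hD0 N ?mono
    · rw [hDN] at habel
      simpa using habel
    case mono =>
      intro l hl hlN
      rcases eq_or_lt_of_le hlN with h | hlt
      · subst h
        rw [hDN]; simp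
      · by_cases hpl : p ⟨l, hlt⟩ = 0
        · have hDl : D l = 0 := by
            have hA : PartSum p l = 1 := partSum_eq_one_of_zero ⟨hp0, hpd, hp1⟩ ⟨l, hlt⟩ hpl
            have hB1 : PartSum q l ≤ 1 := hq1 ▸ partSum_le_sum hq0 l
            have hB : PartSum q l = 1 := le_antisymm hB1 (hA ▸ hm l)
            simp [hD, hA, hB]
          rw [hDl]; simp
        · have hppos : 0 < p ⟨l, hlt⟩ := lt_of_le_of_ne (hp0 _) (Ne.symm hpl)
          have hl1 : l - 1 < N := by omega
          have hle : p ⟨l, hlt⟩ ≤ p ⟨l-1, hl1⟩ := by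
            apply hpd
            rw [Fin.le_def]; simp
          have hlog : Real.log (p ⟨l, hlt⟩) ≤ Real.log (p ⟨l-1, hl1⟩) :=
            Real.log_le_log hppos hle
          have hCle : C (l-1) ≤ C l := by
            simp only [hC]
            rw [dif_pos hl1, dif_pos hlt]
            simp only [hc]
            linarith
          exact mul_le_mul_of_nonneg_right hCle (hDnn l)
  have step1 : ∀ i : Fin N, -(q i * Real.log (q i)) - -(p i * Real.log (p i))
      ≤ c i * (q i - p i) := fun i => grad_ineq (p i) (q i) (hp0 i) (hq0 i) (hzero i)
  have hdiff : H q - H p = ∑ i : Fin N,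
      (-(q i * Real.log (q i)) - -(p i * Real.log (p i))) := by
    unfold H
    rw [Finset.sum_sub_distrib]
    simp [Finset.sum_neg_distrib]
  have := Finset.sum_le_sum (fun i (_ : i ∈ Finset.univ) => step1 i)
  linarith [hdiff ▸ this, step2]

/-- χ_sup = ψ ∨ φ minimizes the lattice distance d(φ,·) over all χ ∈ δ_N with ψ ≺ χ. -/
theorem chiSup_minimizes_dist {N : ℕ} (ψ φ χsup : Fin N → ℝ)
    (hψ : IsDecProb ψ) (hφ : IsDecProb φ) (hnmaj : ¬ Maj ψ φ)
    (hsup : IsSup χsup ψ φ) :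
    ∀ χ sφχ sφχsup : Fin N → ℝ, IsDecProb χ → Maj ψ χ →
      IsSup sφχ φ χ → IsSup sφχsup φ χsup →
      H φ + H χ - 2 * H sφχ ≥ H φ + H χsup - 2 * H sφχsup := by
  intro χ sφχ sφχsup hχ hψχ hsφχ hsφχsup
  obtain ⟨hs1, hψs, hφs, hsmin⟩ := hsup
  obtain ⟨ha1, hφa, hχa, hamin⟩ := hsφχ
  obtain ⟨hb1, hφb, hcb, hbmin⟩ := hsφχsup
  -- χsup ≺ sφχ
  have hχsup_a : Maj χsup sφχ :=
    hsmin sφχ ha1 (maj_trans hψχ hχa) hφa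
  -- sφχsup ≺ χsup and χsup ≺ sφχsup, so entropies equal
  have hb_χsup : Maj sφχsup χsup :=
    hbmin χsup hs1 hφs (fun l => le_rfl)
  have hH1 : H sφχsup = H χsup :=
    le_antisymm (schur_H hs1 hb1 hcb) (schur_H hb1 hs1 hb_χsup)
  have hH2 : H sφχ ≤ H χsup := schur_H hs1 ha1 hχsup_a
  have hH3 : H sφχ ≤ H χ := schur_H hχ ha1 hχa
  rw [hH1]
  linarith
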